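/- Let κ ∈ ℝ and a < b be reals. Let u : [a,b] → ℝ be lower semicontinuous on [a,b] and continuous on (a,b). Suppose there exists a twice differentiable function F : (a,b) → ℝ with F''(x) = −κ·u(x) for all x ∈ (a,b) such that u − F is concave on (a,b). Then u satisfies the κ-concavity inequality on [a,b]: for all x, y ∈ [a,b] with 0 < y − x (and additionally (y−x)·√κ < π if κ > 0) and all t ∈ [0,1], u((1−t)x + t y) ≥ (sin_κ((1−t)(y−x))/sin_κ(y−x))·u(x) + (sin_κ(t(y−x))/sin_κ(y−x))·u(y). -/

import Mathlib

set_option maxHeartbeats 1000000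


open Real Set

/-- The generalized sine function `sin_κ`. -/
noncomputable def sinK (κ x : ℝ) : ℝ :=
  if κ < 0 then Real.sinh (Real.sqrt (-κ) * x) / Real.sqrt (-κ)
  else if κ = 0 then x
  else Real.sin (Real.sqrt κ * x) / Real.sqrt κ

/-- `u` satisfies the κ-concavity inequality (`u'' + κ u ≤ 0`) on the set `s`. -/
def KConcIneqOn (κ : ℝ) (u : ℝ → ℝ) (s : Set ℝ) : Prop :=
  ∀ x ∈ s, ∀ y ∈ s, 0 < y - x → (0 < κ → (y - x) * Real.sqrt κ < Real.pi) →
    ∀ t ∈ Set.Icc (0:ℝ) 1,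
      u ((1 - t) * x + t * y) ≥
        (sinK κ ((1 - t) * (y - x)) / sinK κ (y - x)) * u x +
        (sinK κ (t * (y - x)) / sinK κ (y - x)) * u y

noncomputable def cosK (κ x : ℝ) : ℝ :=
  if κ < 0 then Real.cosh (Real.sqrt (-κ) * x)
  else if κ = 0 then 1
  else Real.cos (Real.sqrt κ * x)

lemma sinK_zero (κ : ℝ) : sinK κ 0 = 0 := by
  unfold sinK
  split_ifs <;> simp

lemma kpos_of_not (κ : ℝ) (h1 : ¬ κ < 0) (h2 : ¬ κ = 0) : 0 < κ :=
  lt_of_le_of_ne (not_lt.1 h1) (Ne.symm h2)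

lemma sinK_pos {κ d : ℝ} (hd : 0 < d) (hlen : 0 < κ → d * Real.sqrt κ < π) :
    0 < sinK κ d := by
  unfold sinK
  split_ifs with h1 h2
  · have hc : 0 < Real.sqrt (-κ) := Real.sqrt_pos.2 (by linarith)
    exact div_pos (by positivity) hc
  · exact hd
  · have hκ : 0 < κ := kpos_of_not κ h1 h2
    have hc : 0 < Real.sqrt κ := Real.sqrt_pos.2 hκ
    refine div_pos (Real.sin_pos_of_pos_of_lt_pi (by positivity) ?_) hc
    have := hlen hκ
    nlinarith [this]

lemma cosK_pos {κ t : ℝ} (h : 0 < κ → |t| * Real.sqrt κ < π / 2) : 0 < cosK κ t := by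
  unfold cosK
  split_ifs with h1 h2
  · positivity
  · norm_num
  · have hκ : 0 < κ := kpos_of_not κ h1 h2
    have hc : 0 < Real.sqrt κ := Real.sqrt_pos.2 hκ
    have ht := h hκ
    apply Real.cos_pos_of_mem_Ioo
    constructor
    · have : -t ≤ |t| := neg_le_abs t
      nlinarith [this]
    · have : t ≤ |t| := le_abs_self t
      nlinarith [this]

lemma hasDerivAt_sinK (κ t : ℝ) : HasDerivAt (sinK κ) (cosK κ t) t := by
  unfold sinK cosK
  split_ifs with h1 h2
  · have hc : 0 < Real.sqrt (-κ) := Real.sqrt_pos.2 (by linarith)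
    have hb : HasDerivAt (fun x => Real.sqrt (-κ) * x) (Real.sqrt (-κ)) t := by
      simpa using (hasDerivAt_id t).const_mul (Real.sqrt (-κ))
    have h := (hb.sinh).div_const (Real.sqrt (-κ))
    simpa [mul_div_assoc, div_self hc.ne'] using h
  · exact hasDerivAt_id' t
  · have hκ : 0 < κ := kpos_of_not κ h1 h2
    have hc : 0 < Real.sqrt κ := Real.sqrt_pos.2 hκ
    have hb : HasDerivAt (fun x => Real.sqrt κ * x) (Real.sqrt κ) t := by
      simpa using (hasDerivAt_id t).const_mul (Real.sqrt κ)
    have h := (hb.sin).div_const (Real.sqrt κ)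
    simpa [mul_div_assoc, div_self hc.ne'] using h

lemma hasDerivAt_cosK (κ t : ℝ) : HasDerivAt (cosK κ) (-κ * sinK κ t) t := by
  unfold sinK cosK
  split_ifs with h1 h2
  · have hc : 0 < Real.sqrt (-κ) := Real.sqrt_pos.2 (by linarith)
    have hsq : Real.sqrt (-κ) * Real.sqrt (-κ) = -κ := Real.mul_self_sqrt (by linarith)
    have hb : HasDerivAt (fun x => Real.sqrt (-κ) * x) (Real.sqrt (-κ)) t := by
      simpa using (hasDerivAt_id t).const_mul (Real.sqrt (-κ))
    have h := hb.cosh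
    convert h using 1
    field_simp
    rw [Real.sq_sqrt (by linarith)]; ring
  · subst h2; simpa using hasDerivAt_const t (1:ℝ)
  · have hκ : 0 < κ := kpos_of_not κ h1 h2
    have hc : 0 < Real.sqrt κ := Real.sqrt_pos.2 hκ
    have hsq : Real.sqrt κ * Real.sqrt κ = κ := Real.mul_self_sqrt hκ.le
    have hb : HasDerivAt (fun x => Real.sqrt κ * x) (Real.sqrt κ) t := by
      simpa using (hasDerivAt_id t).const_mul (Real.sqrt κ)
    have h := hb.cos
    convert h using 1
    field_simp
    rw [Real.sq_sqrt hκ.le]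

lemma continuous_sinK (κ : ℝ) : Continuous (sinK κ) :=
  (Differentiable.continuous fun t => (hasDerivAt_sinK κ t).differentiableAt)

lemma continuous_cosK (κ : ℝ) : Continuous (cosK κ) :=
  (Differentiable.continuous fun t => (hasDerivAt_cosK κ t).differentiableAt)

section helpers
variable {a b : ℝ}

lemma exists_support_line {g : ℝ → ℝ} (hg : ConcaveOn ℝ (Ioo a b) g)
    {z : ℝ} (hz : z ∈ Ioo a b) :
    ∃ p : ℝ, ∀ s ∈ Ioo a b, g s ≤ g z + p * (s - z) := by
  obtain ⟨hza, hzb⟩ := hz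
  set S : Set ℝ := (fun s => (g s - g z) / (s - z)) '' (Ioo z b) with hS
  have hne : S.Nonempty := by
    refine ⟨_, ⟨(z + b) / 2, ⟨by linarith, by linarith⟩, rfl⟩⟩
  have hmem1 : (a + z) / 2 ∈ Ioo a b := ⟨by linarith, by linarith⟩
  have hbdd : BddAbove S := by
    refine ⟨(g z - g ((a + z) / 2)) / (z - (a + z) / 2), ?_⟩
    rintro v ⟨s2, hs2, rfl⟩
    have hs2' : s2 ∈ Ioo a b := ⟨by linarith [hs2.1], hs2.2⟩
    have := hg.slope_anti_adjacent hmem1 hs2' (by linarith [hs2.1]) hs2.1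
    simpa using this
  refine ⟨sSup S, fun s hs => ?_⟩
  rcases lt_trichotomy s z with h | h | h
  · have hub : ∀ v ∈ S, v ≤ (g z - g s) / (z - s) := by
      rintro v ⟨s2, hs2, rfl⟩
      have hs2' : s2 ∈ Ioo a b := ⟨by linarith [hs2.1], hs2.2⟩
      have := hg.slope_anti_adjacent hs hs2' h hs2.1
      simpa using this
    have hp : sSup S ≤ (g z - g s) / (z - s) := csSup_le hne hub
    have hzs : 0 < z - s := by linarith
    have := (le_div_iff₀ hzs).1 hp
    nlinarith [this]
  · subst h; simp
  · have hmem : (g s - g z) / (s - z) ∈ S := ⟨s, ⟨h, hs.2⟩, rfl⟩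
    have hp : (g s - g z) / (s - z) ≤ sSup S := le_csSup hbdd hmem
    have hsz : 0 < s - z := by linarith
    have := (div_le_iff₀ hsz).1 hp
    nlinarith [this]

lemma concaveOn_of_hasDerivAt2 {c d : ℝ} {P P' Q : ℝ → ℝ}
    (hP : ∀ s ∈ Icc c d, HasDerivAt P (P' s) s)
    (hP' : ∀ s ∈ Ioo c d, HasDerivAt P' (Q s) s)
    (hQ : ∀ s ∈ Ioo c d, Q s ≤ 0) : ConcaveOn ℝ (Icc c d) P := by
  apply concaveOn_of_hasDerivWithinAt2_nonpos (convex_Icc c d)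
    (f' := P') (f'' := Q)
  · exact fun s hs => (hP s hs).continuousAt.continuousWithinAt
  · intro s hs
    rw [interior_Icc] at hs
    exact ((hP s (Ioo_subset_Icc_self hs)).hasDerivWithinAt)
  · intro s hs
    rw [interior_Icc] at hs
    exact ((hP' s hs).hasDerivWithinAt)
  · intro s hs
    rw [interior_Icc] at hs
    exact hQ s hs

lemma concave_no_interior_min {c d z : ℝ} {P : ℝ → ℝ} (hP : ConcaveOn ℝ (Icc c d) P)
    (hcd : c ≤ d) (hz : z ∈ Icc c d) (hc : 0 < P c) (hd : 0 < P d) (hzv : P z ≤ 0) :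
    False := by
  have hseg : z ∈ segment ℝ c d := by rwa [segment_eq_Icc hcd]
  have := hP.ge_on_segment (left_mem_Icc.2 hcd) (right_mem_Icc.2 hcd) hseg
  have hmin : (0:ℝ) < min (P c) (P d) := lt_min hc hd
  linarith
end helpers

lemma max_principle (κ a b : ℝ) (u F F' ψ ψ' : ℝ → ℝ)
    (hcont : ContinuousOn u (Ioo a b))
    (hF : ∀ s ∈ Ioo a b, HasDerivAt F (F' s) s)
    (hF' : ∀ s ∈ Ioo a b, HasDerivAt F' (-κ * u s) s)
    (hconc : ConcaveOn ℝ (Ioo a b) (fun s => u s - F s))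
    (hψ : ∀ s, HasDerivAt ψ (ψ' s) s)
    (hψ' : ∀ s, HasDerivAt ψ' (-κ * ψ s) s)
    {x y : ℝ} (hx : x ∈ Ioo a b) (hy : y ∈ Ioo a b) (hxy : x < y)
    (hlen : 0 < κ → (y - x) * Real.sqrt κ < π)
    (hux : ψ x = u x) (huy : ψ y = u y) :
    ∀ s ∈ Icc x y, ψ s ≤ u s := by
  have hsub : Icc x y ⊆ Ioo a b := Icc_subset_Ioo hx.1 hy.2
  have hψcont : Continuous ψ := Differentiable.continuous fun s => (hψ s).differentiableAt
  set w : ℝ → ℝ := fun s => u s - ψ s with hwdef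
  have hwcont : ContinuousOn w (Icc x y) := (hcont.mono hsub).sub hψcont.continuousOn
  have hwx : w x = 0 := by simp [hwdef, ← hux]
  have hwy : w y = 0 := by simp [hwdef, ← huy]
  -- second derivative structure of h := F - ψ
  have hh : ∀ s ∈ Ioo a b, HasDerivAt (fun s => F s - ψ s) (F' s - ψ' s) s :=
    fun s hs => (hF s hs).sub (hψ s)
  have hh' : ∀ s ∈ Ioo a b, HasDerivAt (fun s => F' s - ψ' s) (-κ * w s) s := by
    intro s hs
    have := (hF' s hs).sub (hψ' s)
    refine this.congr_deriv ?_
    simp only [hwdef]; ring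
  by_contra hcon
  push_neg at hcon
  obtain ⟨z₀, hz₀mem, hz₀⟩ := hcon
  have hwz₀ : w z₀ < 0 := by simp only [hwdef]; linarith
  have hxz₀ : x < z₀ := by
    rcases eq_or_lt_of_le hz₀mem.1 with h | h
    · exfalso; rw [← h] at hwz₀; linarith [hwx, hwz₀]
    · exact h
  have hz₀y : z₀ < y := by
    rcases eq_or_lt_of_le hz₀mem.2 with h | h
    · exfalso; rw [h] at hwz₀; linarith [hwy, hwz₀]
    · exact h
  rcases le_or_gt κ 0 with hκ | hκ
  · -- κ ≤ 0 : connected-component argument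
    set Zl : Set ℝ := Icc x z₀ ∩ w ⁻¹' {0} with hZl
    have hZlclosed : IsClosed Zl :=
      (hwcont.mono (Icc_subset_Icc_right hz₀mem.2)).preimage_isClosed_of_isClosed
        isClosed_Icc isClosed_singleton
    have hZlne : Zl.Nonempty := ⟨x, ⟨le_refl x, hxz₀.le⟩, by simp [hwx]⟩
    have hZlbdd : BddAbove Zl := ⟨z₀, fun s hs => hs.1.2⟩
    set p := sSup Zl with hpdef
    have hpmem : p ∈ Zl := hZlclosed.csSup_mem hZlne hZlbdd
    have hwp : w p = 0 := hpmem.2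
    have hpz₀ : p < z₀ := by
      rcases eq_or_lt_of_le hpmem.1.2 with h | h
      · exfalso; rw [h] at hwp; linarith
      · exact h
    have hxp : x ≤ p := hpmem.1.1
    set Zr : Set ℝ := Icc z₀ y ∩ w ⁻¹' {0} with hZr
    have hZrclosed : IsClosed Zr :=
      (hwcont.mono (Icc_subset_Icc_left hz₀mem.1)).preimage_isClosed_of_isClosed
        isClosed_Icc isClosed_singleton
    have hZrne : Zr.Nonempty := ⟨y, ⟨hz₀y.le, le_refl y⟩, by simp [hwy]⟩
    have hZrbdd : BddBelow Zr := ⟨z₀, fun s hs => hs.1.1⟩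
    set q := sInf Zr with hqdef
    have hqmem : q ∈ Zr := hZrclosed.csInf_mem hZrne hZrbdd
    have hwq : w q = 0 := hqmem.2
    have hz₀q : z₀ < q := by
      rcases eq_or_lt_of_le hqmem.1.1 with h | h
      · exfalso; rw [← h] at hwq; linarith
      · exact h
    have hqy : q ≤ y := hqmem.1.2
    -- w < 0 on Ioo p q
    have hneg : ∀ s ∈ Ioo p q, w s < 0 := by
      intro s hs
      by_contra hge
      push_neg at hge
      rcases le_or_gt s z₀ with hsz | hsz
      · have hcont' : ContinuousOn w (Icc s z₀) :=
          hwcont.mono (Icc_subset_Icc (hxp.trans hs.1.le) hz₀mem.2)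
        have : (0:ℝ) ∈ Icc (w z₀) (w s) := ⟨hwz₀.le, hge⟩
        obtain ⟨r, hrmem, hr⟩ := intermediate_value_Icc' hsz hcont' this
        have hrZl : r ∈ Zl := ⟨⟨(hxp.trans hs.1.le).trans hrmem.1, hrmem.2⟩, by simp [hr]⟩
        have : r ≤ p := le_csSup hZlbdd hrZl
        linarith [hrmem.1, hs.1]
      · have hcont' : ContinuousOn w (Icc z₀ s) :=
          hwcont.mono (Icc_subset_Icc hz₀mem.1 (hs.2.le.trans hqy))
        have : (0:ℝ) ∈ Icc (w z₀) (w s) := ⟨hwz₀.le, hge⟩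
        obtain ⟨r, hrmem, hr⟩ := intermediate_value_Icc hsz.le hcont' this
        have hrZr : r ∈ Zr := ⟨⟨hrmem.1, hrmem.2.trans (hs.2.le.trans hqy)⟩, by simp [hr]⟩
        have : q ≤ r := csInf_le hZrbdd hrZr
        linarith [hrmem.2, hs.2]
    -- h := F - ψ is concave on Icc p q
    have hpq_sub : Icc p q ⊆ Ioo a b :=
      fun s hs => hsub ⟨hxp.trans hs.1, hs.2.trans hqy⟩
    have hconch : ConcaveOn ℝ (Icc p q) (fun s => F s - ψ s) := by
      apply concaveOn_of_hasDerivAt2 (P' := fun s => F' s - ψ' s) (Q := fun s => -κ * w s)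
      · exact fun s hs => hh s (hpq_sub hs)
      · exact fun s hs => hh' s (hpq_sub (Ioo_subset_Icc_self hs))
      · intro s hs
        have := hneg s ⟨hs.1, hs.2⟩
        nlinarith
    have hconcg : ConcaveOn ℝ (Icc p q) (fun s => u s - F s) :=
      hconc.subset hpq_sub (convex_Icc p q)
    have hconcw : ConcaveOn ℝ (Icc p q) (fun s => (u s - F s) + (F s - ψ s)) :=
      hconcg.add hconch
    have hzseg : z₀ ∈ segment ℝ p q := by
      rw [segment_eq_Icc (hpz₀.le.trans hz₀q.le)]
      exact ⟨hpz₀.le, hz₀q.le⟩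
    have := hconcw.ge_on_segment (left_mem_Icc.2 (hpz₀.le.trans hz₀q.le))
      (right_mem_Icc.2 (hpz₀.le.trans hz₀q.le)) hzseg
    have e1 : u p - F p + (F p - ψ p) = w p := by simp only [hwdef]; ring
    have e2 : u q - F q + (F q - ψ q) = w q := by simp only [hwdef]; ring
    have e3 : u z₀ - F z₀ + (F z₀ - ψ z₀) = w z₀ := by simp only [hwdef]; ring
    rw [e1, e2, e3, hwp, hwq] at this
    simp at this
    linarith
  · -- κ > 0 : comparison with cosK
    have hsqκ : 0 < Real.sqrt κ := Real.sqrt_pos.2 hκ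
    set m₀ := (x + y) / 2 with hm₀
    set η : ℝ → ℝ := fun s => cosK κ (s - m₀) with hη
    set η' : ℝ → ℝ := fun s => -κ * sinK κ (s - m₀) with hη'
    have hηd : ∀ s, HasDerivAt η (η' s) s := by
      intro s
      have hb2 : HasDerivAt (fun s : ℝ => s - m₀) 1 s := (hasDerivAt_id s).sub_const m₀
      have := (hasDerivAt_cosK κ (s - m₀)).comp s hb2
      simpa [hη, hη', Function.comp_def] using this
    have hηd' : ∀ s, HasDerivAt η' (-κ * η s) s := by
      intro s
      have hb2 : HasDerivAt (fun s : ℝ => s - m₀) 1 s := (hasDerivAt_id s).sub_const m₀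
      have := ((hasDerivAt_sinK κ (s - m₀)).comp s hb2).const_mul (-κ)
      simpa [hη, hη', Function.comp_def] using this
    have hηpos : ∀ s ∈ Icc x y, 0 < η s := by
      intro s hs
      apply cosK_pos
      intro hκ'
      have h1 : |s - m₀| ≤ (y - x) / 2 := by
        rw [abs_le]; constructor <;> simp [hm₀] <;> [linarith [hs.2, hs.1]; linarith [hs.1, hs.2]]
      have h2 := hlen hκ'
      nlinarith [h1, h2, hsqκ]
    have hηcont : Continuous η := Differentiable.continuous fun s => (hηd s).differentiableAt
    -- minimum of w / η on Icc x y
    set r : ℝ → ℝ := fun s => w s / η s with hr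
    have hrcont : ContinuousOn r (Icc x y) :=
      hwcont.div hηcont.continuousOn (fun s hs => (hηpos s hs).ne')
    obtain ⟨z, hzmem, hzmin⟩ :=
      isCompact_Icc.exists_isMinOn (nonempty_Icc.2 hxy.le) hrcont
    have hzmin' : ∀ s ∈ Icc x y, r z ≤ r s := fun s hs => hzmin hs
    set m := r z with hm
    have hm0 : m < 0 := by
      have h1 : r z ≤ r z₀ := hzmin' z₀ hz₀mem
      have h2 : r z₀ < 0 := div_neg_of_neg_of_pos hwz₀ (hηpos z₀ hz₀mem)
      linarith
    have hwge : ∀ s ∈ Icc x y, m * η s ≤ w s := by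
      intro s hs
      have := hzmin' s hs
      rw [hr] at this
      exact (le_div_iff₀ (hηpos s hs)).1 this
    have heq : m * η z = w z := by
      show (w z / η z) * η z = w z
      exact div_mul_cancel₀ _ (hηpos z hzmem).ne'
    have hzx : x < z := by
      rcases eq_or_lt_of_le hzmem.1 with h | h
      · exfalso
        have hx0 : r x = 0 := by simp [hr, hwx]
        rw [hm, ← h, hx0] at hm0
        exact lt_irrefl 0 hm0
      · exact h
    have hzy : z < y := by
      rcases eq_or_lt_of_le hzmem.2 with h | h
      · exfalso
        have hy0 : r y = 0 := by simp [hr, hwy]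
        rw [hm, h, hy0] at hm0
        exact lt_irrefl 0 hm0
      · exact h
    -- support line for g at z
    have hzab : z ∈ Ioo a b := hsub hzmem
    obtain ⟨p, hp⟩ := exists_support_line hconc hzab
    -- P := p (s - z) + H s - H z  with  H = F - ψ - m η
    set H : ℝ → ℝ := fun s => F s - ψ s - m * η s with hH
    set H' : ℝ → ℝ := fun s => F' s - ψ' s - m * η' s with hH'
    have hHd : ∀ s ∈ Ioo a b, HasDerivAt H (H' s) s := by
      intro s hs
      exact ((hF s hs).sub (hψ s)).sub ((hηd s).const_mul m)
    have hHd' : ∀ s ∈ Ioo a b, HasDerivAt H' (-κ * (w s - m * η s)) s := by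
      intro s hs
      have := ((hF' s hs).sub (hψ' s)).sub ((hηd' s).const_mul m)
      refine this.congr_deriv ?_
      simp only [hwdef]; ring
    set P : ℝ → ℝ := fun s => p * (s - z) + (H s - H z) with hP
    have hPd : ∀ s ∈ Icc x y, HasDerivAt P (p + H' s) s := by
      intro s hs
      exact (((hasDerivAt_id s).sub_const z).const_mul p).add
        ((hHd s (hsub hs)).sub_const (H z)) |>.congr_deriv (by ring)
    have hPd' : ∀ s ∈ Ioo x y, HasDerivAt (fun s => p + H' s) (-κ * (w s - m * η s)) s := by
      intro s hs
      exact (hHd' s (hsub (Ioo_subset_Icc_self hs))).const_add p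
    have hPconc : ConcaveOn ℝ (Icc x y) P := by
      apply concaveOn_of_hasDerivAt2 hPd hPd'
      intro s hs
      have h1 := hwge s (Ioo_subset_Icc_self hs)
      nlinarith
    -- P ≥ w - m η  on Icc x y
    have hPge : ∀ s ∈ Icc x y, w s - m * η s ≤ P s := by
      intro s hs
      have hgs := hp s (hsub hs)
      have : w s - m * η s = (u s - F s) + H s := by simp [hwdef, hH]; ring
      rw [this]
      have hz' : w z - m * η z = (u z - F z) + H z := by simp [hwdef, hH]; ring
      have hz0 : (u z - F z) + H z = 0 := by rw [← hz']; rw [← heq]; ring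
      have : (u s - F s) + H s ≤ (u z - F z + p * (s - z)) + H s := by linarith
      calc (u s - F s) + H s ≤ (u z - F z + p * (s - z)) + H s := this
        _ = p * (s - z) + (H s - H z) + ((u z - F z) + H z) := by ring
        _ = P s := by rw [hz0]; simp [hP]
    have hPx : 0 < P x := by
      have := hPge x (left_mem_Icc.2 hxy.le)
      have h2 : 0 < -m * η x := by
        have := hηpos x (left_mem_Icc.2 hxy.le)
        nlinarith
      rw [hwx] at this
      linarith
    have hPy : 0 < P y := by
      have := hPge y (right_mem_Icc.2 hxy.le)
      have h2 : 0 < -m * η y := by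
        have := hηpos y (right_mem_Icc.2 hxy.le)
        nlinarith
      rw [hwy] at this
      linarith
    have hPz : P z ≤ 0 := by simp [hP]
    exact concave_no_interior_min hPconc hxy.le hzmem hPx hPy hPz

lemma interior_chord (κ a b : ℝ) (u F F' : ℝ → ℝ)
    (hcont : ContinuousOn u (Ioo a b))
    (hF : ∀ s ∈ Ioo a b, HasDerivAt F (F' s) s)
    (hF' : ∀ s ∈ Ioo a b, HasDerivAt F' (-κ * u s) s)
    (hconc : ConcaveOn ℝ (Ioo a b) (fun s => u s - F s))
    {x y z : ℝ} (hx : x ∈ Ioo a b) (hy : y ∈ Ioo a b) (hxz : x < z) (hzy : z < y)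
    (hlen : 0 < κ → (y - x) * Real.sqrt κ < π) :
    sinK κ (y - z) / sinK κ (y - x) * u x + sinK κ (z - x) / sinK κ (y - x) * u y ≤ u z := by
  have hxy : x < y := hxz.trans hzy
  have hD : 0 < sinK κ (y - x) := sinK_pos (by linarith) hlen
  set ψ : ℝ → ℝ :=
    fun s => (sinK κ (y - s) * u x + sinK κ (s - x) * u y) / sinK κ (y - x) with hψdef
  set ψ' : ℝ → ℝ :=
    fun s => (-(cosK κ (y - s)) * u x + cosK κ (s - x) * u y) / sinK κ (y - x) with hψ'def
  have h1 : ∀ s : ℝ, HasDerivAt (fun s : ℝ => y - s) (-1) s :=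
    fun s => (hasDerivAt_id s).const_sub y
  have h3 : ∀ s : ℝ, HasDerivAt (fun s : ℝ => s - x) 1 s :=
    fun s => (hasDerivAt_id s).sub_const x
  have hψd : ∀ s, HasDerivAt ψ (ψ' s) s := by
    intro s
    have h2 : HasDerivAt (fun s : ℝ => sinK κ (y - s)) (-(cosK κ (y - s))) s := by
      have := (hasDerivAt_sinK κ (y - s)).comp s (h1 s)
      simpa [Function.comp_def] using this
    have h4 : HasDerivAt (fun s : ℝ => sinK κ (s - x)) (cosK κ (s - x)) s := by
      have := (hasDerivAt_sinK κ (s - x)).comp s (h3 s)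
      simpa [Function.comp_def] using this
    exact ((h2.mul_const (u x)).add (h4.mul_const (u y))).div_const _
  have hψd' : ∀ s, HasDerivAt ψ' (-κ * ψ s) s := by
    intro s
    have h2 : HasDerivAt (fun s : ℝ => -(cosK κ (y - s))) (-κ * sinK κ (y - s)) s := by
      have := ((hasDerivAt_cosK κ (y - s)).comp s (h1 s)).neg
      exact this.congr_deriv (by ring)
    have h4 : HasDerivAt (fun s : ℝ => cosK κ (s - x)) (-κ * sinK κ (s - x)) s := by
      have := (hasDerivAt_cosK κ (s - x)).comp s (h3 s)
      simpa [Function.comp_def] using this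
    have := ((h2.mul_const (u x)).add (h4.mul_const (u y))).div_const (sinK κ (y - x))
    refine this.congr_deriv ?_
    simp only [hψdef]
    ring
  have hψx : ψ x = u x := by
    simp only [hψdef]
    rw [sub_self, sinK_zero]
    field_simp
    ring
  have hψy : ψ y = u y := by
    simp only [hψdef]
    rw [sub_self, sinK_zero]
    field_simp
    ring
  have key := max_principle κ a b u F F' ψ ψ' hcont hF hF' hconc hψd hψd'
    hx hy hxy hlen hψx hψy z ⟨hxz.le, hzy.le⟩
  calc sinK κ (y - z) / sinK κ (y - x) * u x + sinK κ (z - x) / sinK κ (y - x) * u y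
      = ψ z := by simp only [hψdef]; ring
    _ ≤ u z := key

/-- If `u` is lower semicontinuous on `[a,b]`, continuous on `(a,b)`, and there is a
twice differentiable `F` on `(a,b)` with `F'' = -κ u` such that `u - F` is concave on
`(a,b)`, then `u` satisfies the κ-concavity inequality on `[a,b]`. -/
theorem kConcIneq_of_concave_sub (κ a b : ℝ) (hab : a < b) (u F F' : ℝ → ℝ)
    (hlsc : LowerSemicontinuousOn u (Set.Icc a b))
    (hcont : ContinuousOn u (Set.Ioo a b))
    (hF : ∀ x ∈ Set.Ioo a b, HasDerivAt F (F' x) x)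
    (hF' : ∀ x ∈ Set.Ioo a b, HasDerivAt F' (-κ * u x) x)
    (hconc : ConcaveOn ℝ (Set.Ioo a b) (fun x => u x - F x)) :
    KConcIneqOn κ u (Set.Icc a b) := by
  intro x hx y hy hxy hlen t ht
  have hxy' : x < y := by linarith
  have hD : 0 < sinK κ (y - x) := sinK_pos hxy hlen
  rcases eq_or_lt_of_le ht.1 with ht0 | ht0
  · rw [← ht0]
    norm_num [sinK_zero, div_self hD.ne']
  rcases eq_or_lt_of_le ht.2 with ht1 | ht1
  · rw [ht1]
    norm_num [sinK_zero, div_self hD.ne']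
  -- main case : 0 < t < 1
  set z := (1 - t) * x + t * y with hzdef
  have hxz : x < z := by
    have : z - x = t * (y - x) := by rw [hzdef]; ring
    nlinarith [this]
  have hzy : z < y := by
    have : y - z = (1 - t) * (y - x) := by rw [hzdef]; ring
    nlinarith [this]
  have e1 : (1 - t) * (y - x) = y - z := by rw [hzdef]; ring
  have e2 : t * (y - x) = z - x := by rw [hzdef]; ring
  rw [ge_iff_le, e1, e2]
  -- coefficients
  have hlen1 : 0 < κ → (y - z) * Real.sqrt κ < π := by
    intro hκ
    have h2 := hlen hκ
    have hs : 0 < Real.sqrt κ := Real.sqrt_pos.2 hκ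
    nlinarith
  have hlen2 : 0 < κ → (z - x) * Real.sqrt κ < π := by
    intro hκ
    have h2 := hlen hκ
    have hs : 0 < Real.sqrt κ := Real.sqrt_pos.2 hκ
    nlinarith
  have hA : 0 ≤ sinK κ (y - z) / sinK κ (y - x) :=
    (div_pos (sinK_pos (by linarith) hlen1) hD).le
  have hB : 0 ≤ sinK κ (z - x) / sinK κ (y - x) :=
    (div_pos (sinK_pos (by linarith) hlen2) hD).le
  set A := sinK κ (y - z) / sinK κ (y - x) with hAdef
  set B := sinK κ (z - x) / sinK κ (y - x) with hBdef
  -- Step 1 : for every δ > 0, A (u x - δ) + B (u y - δ) ≤ u z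
  have key : ∀ δ : ℝ, 0 < δ → A * (u x - δ) + B * (u y - δ) ≤ u z := by
    intro δ hδ
    set L := nhdsWithin (0:ℝ) (Ioi 0) with hL
    have hmemIoo : Ioo (0:ℝ) (min (z - x) (y - z)) ∈ L := by
      apply Ioo_mem_nhdsGT_of_mem
      exact ⟨le_refl _, lt_min (by linarith) (by linarith)⟩
    -- eventual lower bounds from lower semicontinuity
    have tx : Filter.Tendsto (fun ε : ℝ => x + ε) L (nhdsWithin x (Icc a b)) := by
      apply tendsto_nhdsWithin_of_tendsto_nhds_of_eventually_within
      · have : Filter.Tendsto (fun ε : ℝ => x + ε) (nhds 0) (nhds (x + 0)) :=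
          (continuous_const.add continuous_id).tendsto 0
        simpa using this.mono_left nhdsWithin_le_nhds
      · filter_upwards [hmemIoo] with ε hε
        exact ⟨by linarith [hx.1, hε.1], by linarith [hε.2, min_le_left (z - x) (y - z),
          hzy, hy.2]⟩
    have ty : Filter.Tendsto (fun ε : ℝ => y - ε) L (nhdsWithin y (Icc a b)) := by
      apply tendsto_nhdsWithin_of_tendsto_nhds_of_eventually_within
      · have : Filter.Tendsto (fun ε : ℝ => y - ε) (nhds 0) (nhds (y - 0)) :=
          (continuous_const.sub continuous_id).tendsto 0
        simpa using this.mono_left nhdsWithin_le_nhds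
      · filter_upwards [hmemIoo] with ε hε
        exact ⟨by linarith [hε.2, min_le_right (z - x) (y - z), hxz, hx.1], by
          linarith [hε.1, hy.2]⟩
    have ev1 : ∀ᶠ ε in L, u x - δ < u (x + ε) :=
      tx.eventually (hlsc x hx (u x - δ) (by linarith))
    have ev2 : ∀ᶠ ε in L, u y - δ < u (y - ε) :=
      ty.eventually (hlsc y hy (u y - δ) (by linarith))
    -- eventual chord inequality
    have ev3 : ∀ᶠ ε in L,
        sinK κ (y - ε - z) / sinK κ (y - ε - (x + ε)) * (u x - δ) +
        sinK κ (z - (x + ε)) / sinK κ (y - ε - (x + ε)) * (u y - δ) ≤ u z := by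
      filter_upwards [hmemIoo, ev1, ev2] with ε hε he1 he2
      have hε1 : 0 < ε := hε.1
      have hε2 : ε < z - x := lt_of_lt_of_le hε.2 (min_le_left _ _)
      have hε3 : ε < y - z := lt_of_lt_of_le hε.2 (min_le_right _ _)
      have hx' : x + ε ∈ Ioo a b := ⟨by linarith [hx.1], by linarith [hy.2]⟩
      have hy' : y - ε ∈ Ioo a b := ⟨by linarith [hx.1], by linarith [hy.2]⟩
      have hlen' : 0 < κ → (y - ε - (x + ε)) * Real.sqrt κ < π := by
        intro hκ
        have h2 := hlen hκ
        have hs : 0 < Real.sqrt κ := Real.sqrt_pos.2 hκ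
        nlinarith
      have hchord := interior_chord κ a b u F F' hcont hF hF' hconc hx' hy'
        (show x + ε < z by linarith) (show z < y - ε by linarith) hlen'
      have hD' : 0 < sinK κ (y - ε - (x + ε)) := sinK_pos (by linarith) hlen'
      have hc1 : 0 ≤ sinK κ (y - ε - z) / sinK κ (y - ε - (x + ε)) := by
        apply div_nonneg _ hD'.le
        refine (sinK_pos (by linarith) ?_).le
        intro hκ
        have h2 := hlen hκ
        have hs : 0 < Real.sqrt κ := Real.sqrt_pos.2 hκ
        nlinarith
      have hc2 : 0 ≤ sinK κ (z - (x + ε)) / sinK κ (y - ε - (x + ε)) := by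
        apply div_nonneg _ hD'.le
        refine (sinK_pos (by linarith) ?_).le
        intro hκ
        have h2 := hlen hκ
        have hs : 0 < Real.sqrt κ := Real.sqrt_pos.2 hκ
        nlinarith
      calc sinK κ (y - ε - z) / sinK κ (y - ε - (x + ε)) * (u x - δ) +
            sinK κ (z - (x + ε)) / sinK κ (y - ε - (x + ε)) * (u y - δ)
          ≤ sinK κ (y - ε - z) / sinK κ (y - ε - (x + ε)) * u (x + ε) +
            sinK κ (z - (x + ε)) / sinK κ (y - ε - (x + ε)) * u (y - ε) := by
            apply add_le_add
            · exact mul_le_mul_of_nonneg_left he1.le hc1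
            · exact mul_le_mul_of_nonneg_left he2.le hc2
        _ ≤ u z := hchord
    -- limits of the coefficients
    have hkc : Continuous (sinK κ) := continuous_sinK κ
    have n1 : Filter.Tendsto (fun ε : ℝ => sinK κ (y - ε - z)) (nhds 0)
        (nhds (sinK κ (y - z))) := by
      have : Continuous fun ε : ℝ => sinK κ (y - ε - z) :=
        hkc.comp ((continuous_const.sub continuous_id).sub continuous_const)
      have h0 := this.tendsto 0
      simpa using h0
    have n2 : Filter.Tendsto (fun ε : ℝ => sinK κ (z - (x + ε))) (nhds 0)
        (nhds (sinK κ (z - x))) := by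
      have : Continuous fun ε : ℝ => sinK κ (z - (x + ε)) :=
        hkc.comp (continuous_const.sub (continuous_const.add continuous_id))
      have h0 := this.tendsto 0
      simpa using h0
    have n3 : Filter.Tendsto (fun ε : ℝ => sinK κ (y - ε - (x + ε))) (nhds 0)
        (nhds (sinK κ (y - x))) := by
      have : Continuous fun ε : ℝ => sinK κ (y - ε - (x + ε)) :=
        hkc.comp ((continuous_const.sub continuous_id).sub (continuous_const.add continuous_id))
      have h0 := this.tendsto 0
      have e : y - (0:ℝ) - (x + 0) = y - x := by ring
      simpa [e] using h0
    have tendLHS : Filter.Tendsto (fun ε : ℝ =>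
        sinK κ (y - ε - z) / sinK κ (y - ε - (x + ε)) * (u x - δ) +
        sinK κ (z - (x + ε)) / sinK κ (y - ε - (x + ε)) * (u y - δ)) L
        (nhds (A * (u x - δ) + B * (u y - δ))) := by
      have h1 := ((n1.div n3 hD.ne').mul_const (u x - δ)).add
        ((n2.div n3 hD.ne').mul_const (u y - δ))
      exact h1.mono_left nhdsWithin_le_nhds
    exact le_of_tendsto tendLHS ev3
  -- Step 2 : let δ → 0
  apply le_of_forall_pos_le_add
  intro ε hε
  have hδ : 0 < ε / (A + B + 1) := by positivity
  have h1 := key _ hδ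
  have h2 : (A + B) * (ε / (A + B + 1)) ≤ ε := by
    have : (A + B) / (A + B + 1) ≤ 1 := by
      rw [div_le_one (by positivity)]
      linarith
    calc (A + B) * (ε / (A + B + 1)) = ε * ((A + B) / (A + B + 1)) := by ring
      _ ≤ ε * 1 := by
          apply mul_le_mul_of_nonneg_left this hε.le
      _ = ε := by ring
  nlinarith [h1, h2]
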